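/- Let H be a graph of order n' ≥ 2 with maximum degree Δ(H). The join K_1 + H is k-metric dimensional if and only if k = min{ C(H), n' − Δ(H) + 1 }, where C(H) = min over distinct x,y ∈ V(H) of |(N_H(x) △ N_H(y)) ∪ {x,y}|. -/

import Mathlib

open SimpleGraph

/-- `S` is a `k`-metric generator for `G`: every pair of distinct vertices is
distinguished (has different distances) by at least `k` vertices of `S`. -/
def kMetricGen {V : Type*} [Fintype V] (G : SimpleGraph V) (k : ℕ) (S : Set V) : Prop :=
  ∀ u v : V, u ≠ v → ∃ T : Finset V, ↑T ⊆ S ∧ k ≤ T.card ∧ ∀ w ∈ T, G.dist u w ≠ G.dist v w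

/-- `G` is `k`-metric dimensional: `k` is the largest integer admitting a `k`-metric generator. -/
def kMetricDimensional {V : Type*} [Fintype V] (G : SimpleGraph V) (k : ℕ) : Prop :=
  (∃ S : Set V, kMetricGen G k S) ∧ ∀ k' : ℕ, (∃ S : Set V, kMetricGen G k' S) → k' ≤ k

/-- The `k`-metric dimension of `G`. -/
noncomputable def kMetricDim {V : Type*} [Fintype V] (G : SimpleGraph V) (k : ℕ) : ℕ :=
  sInf {m | ∃ S : Finset V, kMetricGen G k ↑S ∧ S.card = m}

/-- A `k`-metric basis: a minimum-cardinality `k`-metric generator. -/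
def kMetricBasis {V : Type*} [Fintype V] (G : SimpleGraph V) (k : ℕ) (B : Finset V) : Prop :=
  kMetricGen G k ↑B ∧ ∀ T : Finset V, kMetricGen G k ↑T → B.card ≤ T.card

/-- Auxiliary relation for the corona product. -/
def coronaRel {V : Type*} {W : V → Type*} (G : SimpleGraph V) (H : ∀ v, SimpleGraph (W v)) :
    (V ⊕ (Σ v, W v)) → (V ⊕ (Σ v, W v)) → Prop
  | Sum.inl a, Sum.inl b => G.Adj a b
  | Sum.inl a, Sum.inr b => a = b.1
  | Sum.inr a, Sum.inr b => ∃ h : a.1 = b.1, (H b.1).Adj (h ▸ a.2) b.2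
  | _, _ => False

/-- The corona product `G ⊙ 𝓗`: one copy of `G`, and each vertex `v` of `G` joined by an
edge to every vertex of its own copy of `H v`. -/
def corona {V : Type*} {W : V → Type*} (G : SimpleGraph V) (H : ∀ v, SimpleGraph (W v)) :
    SimpleGraph (V ⊕ (Σ v, W v)) :=
  SimpleGraph.fromRel (coronaRel G H)

/-- The join `K₁ + H`: a new vertex (`none`) adjacent to every vertex of `H`. -/
def K1join {U : Type*} (H : SimpleGraph U) : SimpleGraph (Option U) :=
  SimpleGraph.fromRel (fun x y => match x, y with
    | none, some _ => True
    | some a, some b => H.Adj a b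
    | _, _ => False)

/-- `𝒞(H) = min_{x ≠ y} |(N(x) △ N(y)) ∪ {x,y}|`. -/
noncomputable def CC {U : Type*} (H : SimpleGraph U) : ℕ :=
  sInf {m | ∃ x y : U, x ≠ y ∧
    (symmDiff (H.neighborSet x) (H.neighborSet y) ∪ {x, y}).ncard = m}
section Aux

variable {U : Type*} [Fintype U] (H : SimpleGraph U) [DecidableRel H.Adj]

lemma K1_adj_none_some (u : U) : (K1join H).Adj none (some u) := by
  simp [K1join, SimpleGraph.fromRel_adj]

lemma K1_adj_some_some (a b : U) : (K1join H).Adj (some a) (some b) ↔ H.Adj a b := by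
  simp only [K1join, SimpleGraph.fromRel_adj]
  constructor
  · rintro ⟨h, h2 | h2⟩
    · exact h2
    · exact h2.symm
  · intro h
    exact ⟨by simpa using h.ne, Or.inl h⟩

lemma K1_dist_none_some (u : U) : (K1join H).dist none (some u) = 1 :=
  SimpleGraph.dist_eq_one_iff_adj.mpr (K1_adj_none_some H u)

lemma K1_dist_some_none (u : U) : (K1join H).dist (some u) none = 1 := by
  rw [SimpleGraph.dist_comm]; exact K1_dist_none_some H u

lemma K1_dist_some_some_adj {a b : U} (h : H.Adj a b) :
    (K1join H).dist (some a) (some b) = 1 :=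
  SimpleGraph.dist_eq_one_iff_adj.mpr ((K1_adj_some_some H a b).mpr h)

lemma K1_dist_some_some_nadj {a b : U} (hab : a ≠ b) (h : ¬H.Adj a b) :
    (K1join H).dist (some a) (some b) = 2 := by
  let w : (K1join H).Walk (some a) (some b) :=
    SimpleGraph.Walk.cons (K1_adj_none_some H a).symm
      (SimpleGraph.Walk.cons (K1_adj_none_some H b) SimpleGraph.Walk.nil)
  have h2 : (K1join H).dist (some a) (some b) ≤ 2 := SimpleGraph.dist_le w
  have h0 : (K1join H).dist (some a) (some b) ≠ 0 := by
    rw [Ne, SimpleGraph.dist_eq_zero_iff_eq_or_not_reachable]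
    push_neg
    exact ⟨by simpa using hab, ⟨w⟩⟩
  have h1 : (K1join H).dist (some a) (some b) ≠ 1 := by
    rw [Ne, SimpleGraph.dist_eq_one_iff_adj, K1_adj_some_some]
    exact h
  omega

/-- The set of vertices distinguishing `u` and `v` in `K₁ + H`. -/
def Dst (u v : Option U) : Set (Option U) :=
  {w | (K1join H).dist u w ≠ (K1join H).dist v w}

lemma Dst_symm (u v : Option U) : Dst H u v = Dst H v u := by
  ext w; exact ne_comm

lemma Dst_none_some (y : U) :
    Dst H none (some y) = insert none (some '' (H.neighborSet y)ᶜ) := by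
  ext w
  cases w with
  | none =>
    simp only [Dst, Set.mem_setOf_eq, Set.mem_insert_iff]
    simp [SimpleGraph.dist_self, K1_dist_some_none H y]
  | some z =>
    simp only [Dst, Set.mem_setOf_eq, Set.mem_insert_iff, Set.mem_image,
      K1_dist_none_some H z]
    by_cases hzy : z = y
    · subst hzy
      simp [SimpleGraph.dist_self, SimpleGraph.mem_neighborSet]
    · by_cases hadj : H.Adj y z
      · simp [K1_dist_some_some_adj H hadj, hzy, SimpleGraph.mem_neighborSet, hadj]
      · simp [K1_dist_some_some_nadj H (fun h => hzy h.symm) hadj, hzy,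
          SimpleGraph.mem_neighborSet, hadj]

lemma Dst_some_some {x y : U} (hxy : x ≠ y) :
    Dst H (some x) (some y) =
      some '' (symmDiff (H.neighborSet x) (H.neighborSet y) ∪ {x, y}) := by
  ext w
  cases w with
  | none =>
    simp [Dst, K1_dist_some_none H x, K1_dist_some_none H y]
  | some z =>
    simp only [Dst, Set.mem_setOf_eq, Set.mem_image, Option.some.injEq,
      exists_eq_right, Set.mem_union, Set.mem_symmDiff, SimpleGraph.mem_neighborSet,
      Set.mem_insert_iff, Set.mem_singleton_iff]
    by_cases hzx : z = x
    · subst hzx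
      simp only [SimpleGraph.dist_self]
      by_cases hadj : H.Adj y z
      · simp [K1_dist_some_some_adj H hadj]
      · simp [K1_dist_some_some_nadj H (Ne.symm hxy) hadj]
    · by_cases hzy : z = y
      · subst hzy
        simp only [SimpleGraph.dist_self]
        by_cases hadj : H.Adj x z
        · simp [K1_dist_some_some_adj H hadj, hzx]
        · simp [K1_dist_some_some_nadj H hxy hadj, hzx]
      · have hx' : x ≠ z := fun h => hzx h.symm
        have hy' : y ≠ z := fun h => hzy h.symm
        by_cases h1 : H.Adj x z <;> by_cases h2 : H.Adj y z
        · simp [K1_dist_some_some_adj H h1, K1_dist_some_some_adj H h2, h1, h2, hzx, hzy]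
        · simp [K1_dist_some_some_adj H h1, K1_dist_some_some_nadj H hy' h2,
            h1, h2, hzx, hzy]
        · simp [K1_dist_some_some_nadj H hx' h1, K1_dist_some_some_adj H h2,
            h1, h2, hzx, hzy]
        · simp [K1_dist_some_some_nadj H hx' h1, K1_dist_some_some_nadj H hy' h2,
            h1, h2, hzx, hzy]

lemma ncard_Dst_none_some (y : U) :
    (Dst H none (some y)).ncard = Fintype.card U - H.degree y + 1 := by
  rw [Dst_none_some]
  have hnm : (none : Option U) ∉ some '' (H.neighborSet y)ᶜ := by simp
  rw [Set.ncard_insert_of_notMem hnm (Set.toFinite _),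
    Set.ncard_image_of_injective _ (Option.some_injective U)]
  have hc := Set.ncard_add_ncard_compl (H.neighborSet y) (Set.toFinite _) (Set.toFinite _)
  have hdeg : (H.neighborSet y).ncard = H.degree y := by
    rw [Set.ncard_eq_toFinset_card', Set.toFinset_card]
    exact H.card_neighborSet_eq_degree y
  rw [hdeg, Nat.card_eq_fintype_card] at hc
  omega

lemma ncard_Dst_some_some {x y : U} (hxy : x ≠ y) :
    (Dst H (some x) (some y)).ncard =
      (symmDiff (H.neighborSet x) (H.neighborSet y) ∪ {x, y}).ncard := by
  rw [Dst_some_some H hxy, Set.ncard_image_of_injective _ (Option.some_injective U)]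

end Aux

theorem stmt_5 {U : Type*} [Fintype U] (H : SimpleGraph U) [DecidableRel H.Adj]
    (hn : 2 ≤ Fintype.card U) (k : ℕ) :
    kMetricDimensional (K1join H) k ↔
      k = min (CC H) (Fintype.card U - H.maxDegree + 1) := by
  classical
  haveI hU : Nonempty U := Fintype.card_pos_iff.mp (by omega)
  obtain ⟨u0⟩ := id hU
  set M : Set ℕ := {m | ∃ u v : Option U, u ≠ v ∧ (Dst H u v).ncard = m} with hM
  have hMne : M.Nonempty := ⟨_, none, some u0, by simp, rfl⟩
  -- generator existence characterization
  have gen_iff : ∀ k' : ℕ, (∃ S, kMetricGen (K1join H) k' S) ↔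
      ∀ u v : Option U, u ≠ v → k' ≤ (Dst H u v).ncard := by
    intro k'
    constructor
    · rintro ⟨S, hS⟩ u v huv
      obtain ⟨T, hTS, hk, hT⟩ := hS u v huv
      have hsub : (T : Set (Option U)) ⊆ Dst H u v := fun w hw => hT w (by simpa using hw)
      calc k' ≤ T.card := hk
        _ = (T : Set (Option U)).ncard := (Set.ncard_coe_finset T).symm
        _ ≤ _ := Set.ncard_le_ncard hsub (Set.toFinite _)
    · intro h
      refine ⟨Set.univ, fun u v huv => ⟨(Dst H u v).toFinite.toFinset, by simp, ?_, ?_⟩⟩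
      · rw [← Set.ncard_eq_toFinset_card (Dst H u v) (Set.toFinite _)]
        exact h u v huv
      · intro w hw
        exact (Set.Finite.mem_toFinset _).mp hw
  have key : ∀ k' : ℕ, (∀ u v : Option U, u ≠ v → k' ≤ (Dst H u v).ncard) ↔ k' ≤ sInf M := by
    intro k'
    constructor
    · intro h
      refine le_csInf hMne ?_
      rintro m ⟨u, v, huv, rfl⟩
      exact h u v huv
    · intro h u v huv
      exact h.trans (Nat.sInf_le ⟨u, v, huv, rfl⟩)
  have dim_iff : kMetricDimensional (K1join H) k ↔ k = sInf M := by
    unfold kMetricDimensional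
    simp only [gen_iff, key]
    constructor
    · rintro ⟨h1, h2⟩
      exact le_antisymm h1 (h2 _ le_rfl)
    · rintro rfl
      exact ⟨le_rfl, fun _ h => h⟩
  -- compute sInf M
  have hInf : sInf M = min (CC H) (Fintype.card U - H.maxDegree + 1) := by
    apply le_antisymm
    · apply le_min
      · -- CC H ∈ M
        have hne : {m | ∃ x y : U, x ≠ y ∧
            (symmDiff (H.neighborSet x) (H.neighborSet y) ∪ {x, y}).ncard = m}.Nonempty := by
          obtain ⟨a, b, hab⟩ := Fintype.exists_pair_of_one_lt_card hn
          exact ⟨_, a, b, hab, rfl⟩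
        obtain ⟨x, y, hxy, hc⟩ := Nat.sInf_mem hne
        refine Nat.sInf_le ⟨some x, some y, by simpa using hxy, ?_⟩
        rw [ncard_Dst_some_some H hxy, hc]
        rfl
      · obtain ⟨y, hy⟩ := H.exists_maximal_degree_vertex
        refine Nat.sInf_le ⟨none, some y, by simp, ?_⟩
        rw [ncard_Dst_none_some, hy]
    · refine le_csInf hMne ?_
      rintro m ⟨u, v, huv, rfl⟩
      have hns : ∀ y : U, min (CC H) (Fintype.card U - H.maxDegree + 1)
          ≤ (Dst H none (some y)).ncard := by
        intro y
        rw [ncard_Dst_none_some]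
        refine (min_le_right _ _).trans ?_
        have := H.degree_le_maxDegree y
        have h2 := H.maxDegree_le_of_forall_degree_le (Fintype.card U - 1)
          (fun v => by have := H.degree_lt_card_verts v; omega)
        omega
      match u, v with
      | none, none => exact absurd rfl huv
      | none, some y => exact hns y
      | some y, none => rw [Dst_symm]; exact hns y
      | some x, some y =>
        have hxy : x ≠ y := by simpa using huv
        rw [ncard_Dst_some_some H hxy]
        exact (min_le_left _ _).trans (Nat.sInf_le ⟨x, y, hxy, rfl⟩)
  rw [dim_iff, hInf]
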